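/- Let X be a nonempty finite set, m a natural number, μ ∈ (0, 1], and f̃ : X → [0, 1/μ] a function with E_{x∼U(X)}[f̃(x)] = 1, where U(X) is the uniform distribution on X; let D_{f̃} be the probability distribution on X assigning mass f̃(x)/|X| to each x. Let T̄, T̃ : X^m → [0,1], and for each t ∈ [0,1]^m define the distinguisher D_t : X^m → {0,1} by D_t(x) = 1[for all i ∈ [m], μ·f̃(x_i) ≥ t_i]. If γ > 0 is such that |E_{x∼U(X)^m}[D_t(x)·(T̄(x) − T̃(x))]| ≤ γ for every t ∈ [0,1]^m, then |E_{x∼D_{f̃}^m}[T̄(x)] − E_{x∼D_{f̃}^m}[T̃(x)]| ≤ μ^{−m}·γ. -/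

import Mathlib

open MeasureTheory Set

attribute [local instance] Classical.propDecidable
attribute [local instance] MeasureTheory.Measure.Subtype.measureSpace

noncomputable abbrev II : Type := Set.Icc (0:ℝ) 1

instance : IsProbabilityMeasure (volume : Measure II) := by
  constructor
  rw [MeasureTheory.Measure.Subtype.volume_univ measurableSet_Icc.nullMeasurableSet]
  simp

lemma coord_int (a : ℝ) (ha : a ∈ Set.Icc (0:ℝ) 1) :
    ∫ t : II, (if (t : ℝ) ≤ a then (1:ℝ) else 0) = a := by
  rw [MeasureTheory.integral_subtype measurableSet_Icc (fun r : ℝ => if r ≤ a then (1:ℝ) else 0)]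
  have : (fun r : ℝ => if r ≤ a then (1:ℝ) else 0) = (Set.Iic a).indicator (fun _ => 1) := by
    funext r; simp [Set.indicator_apply]
  rw [this, MeasureTheory.setIntegral_indicator measurableSet_Iic]
  rw [MeasureTheory.setIntegral_const]
  have : Set.Icc (0:ℝ) 1 ∩ Set.Iic a = Set.Icc 0 a := by
    ext r; simp only [Set.mem_inter_iff, Set.mem_Icc, Set.mem_Iic]
    constructor
    · rintro ⟨⟨h1, _⟩, h3⟩; exact ⟨h1, h3⟩
    · rintro ⟨h1, h2⟩; exact ⟨⟨h1, h2.trans ha.2⟩, h2⟩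
  rw [this, Real.volume_real_Icc_of_le ha.1, smul_eq_mul, mul_one]
  ring

lemma if_forall_prod {m : ℕ} (P : Fin m → Prop) :
    (if ∀ i, P i then (1:ℝ) else 0) = ∏ i, (if P i then (1:ℝ) else 0) := by
  by_cases h : ∀ i, P i
  · simp [h]
  · push_neg at h
    obtain ⟨i, hi⟩ := h
    rw [if_neg (by push_neg; exact ⟨i, hi⟩), Finset.prod_eq_zero (Finset.mem_univ i) (by simp [hi])]

lemma prod_int (m : ℕ) (c : Fin m → ℝ) (hc : ∀ i, c i ∈ Set.Icc (0:ℝ) 1) :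
    ∫ t : Fin m → II, (if ∀ i, (t i : ℝ) ≤ c i then (1:ℝ) else 0) = ∏ i, c i := by
  have h1 : ∀ t : Fin m → II, (if ∀ i, (t i:ℝ) ≤ c i then (1:ℝ) else 0)
      = ∏ i, (if (t i:ℝ) ≤ c i then (1:ℝ) else 0) := fun t => if_forall_prod _
  simp_rw [h1]
  rw [MeasureTheory.integral_fintype_prod_volume_eq_prod
    (f := fun i (s : II) => if (s:ℝ) ≤ c i then (1:ℝ) else 0)]
  exact Finset.prod_congr rfl fun i _ => coord_int (c i) (hc i)

lemma meas_set {m : ℕ} (c : Fin m → ℝ) :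
    MeasurableSet {t : Fin m → II | ∀ i, (t i : ℝ) ≤ c i} := by
  have : {t : Fin m → II | ∀ i, (t i : ℝ) ≤ c i}
      = ⋂ i, (fun t : Fin m → II => t i) ⁻¹' (Subtype.val ⁻¹' Set.Iic (c i)) := by
    ext t; simp
  rw [this]
  exact MeasurableSet.iInter fun i =>
    (measurable_pi_apply i) (measurable_subtype_coe measurableSet_Iic)

lemma integ {m : ℕ} (c : Fin m → ℝ) (r : ℝ) :
    Integrable (fun t : Fin m → II => (if ∀ i, (t i : ℝ) ≤ c i then (1:ℝ) else 0) * r) := by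
  have : (fun t : Fin m → II => (if ∀ i, (t i : ℝ) ≤ c i then (1:ℝ) else 0) * r)
      = ({t : Fin m → II | ∀ i, (t i : ℝ) ≤ c i}).indicator (fun _ => r) := by
    funext t; by_cases h : ∀ i, (t i:ℝ) ≤ c i <;> simp [Set.indicator_apply, h]
  rw [this]
  exact (integrable_const r).indicator (meas_set c)

/-- **Dense-distribution distinguisher transfer.** Let `f̃ : X → [0, 1/μ]` be a density
function with uniform-average `1`, defining the `μ`-dense distribution `D_{f̃}` with mass
`f̃ x / |X|`.  If `T̃` fools all the threshold distinguishers
`D_t(x) = 1[∀ i, μ·f̃(x i) ≥ t i]` (for `t ∈ [0,1]^m`) against `T̄` up to error `γ` under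
the `m`-fold uniform distribution, then the expectations of `T̄` and `T̃` under the
`m`-fold product `D_{f̃}^m` differ by at most `μ^{-m}·γ`. -/
theorem stmt_14 {X : Type*} [Fintype X] [Nonempty X] (m : ℕ)
    (μ : ℝ) (hμ : μ ∈ Set.Ioc (0 : ℝ) 1)
    (ftil : X → ℝ) (hftil : ∀ x, ftil x ∈ Set.Icc (0 : ℝ) (1 / μ))
    (havg : (∑ x, ftil x) / (Fintype.card X : ℝ) = 1)
    (Tbar Ttil : (Fin m → X) → ℝ)
    (hTbar : ∀ x, Tbar x ∈ Set.Icc (0 : ℝ) 1)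
    (hTtil : ∀ x, Ttil x ∈ Set.Icc (0 : ℝ) 1)
    (γ : ℝ) (hγ : 0 < γ)
    (hreg : ∀ t : Fin m → ℝ, (∀ i, t i ∈ Set.Icc (0 : ℝ) 1) →
      |∑ x : Fin m → X, ((1 : ℝ) / (Fintype.card X : ℝ) ^ m) *
        ((if ∀ i, t i ≤ μ * ftil (x i) then (1 : ℝ) else 0) * (Tbar x - Ttil x))| ≤ γ) :
    |(∑ x : Fin m → X, (∏ i, ftil (x i) / (Fintype.card X : ℝ)) * Tbar x) -
      (∑ x : Fin m → X, (∏ i, ftil (x i) / (Fintype.card X : ℝ)) * Ttil x)| ≤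
      μ ^ (-(m : ℤ)) * γ := by
  obtain ⟨hμ0, hμ1⟩ := hμ
  set N : ℝ := (Fintype.card X : ℝ) with hN
  have key : (∑ x : Fin m → X, (∏ i, ftil (x i) / N) * Tbar x) -
      (∑ x : Fin m → X, (∏ i, ftil (x i) / N) * Ttil x)
      = ∑ x : Fin m → X, (∏ i, ftil (x i) / N) * (Tbar x - Ttil x) := by
    rw [← Finset.sum_sub_distrib]
    exact Finset.sum_congr rfl fun x _ => by ring
  have hc : ∀ x : Fin m → X, ∀ i, μ * ftil (x i) ∈ Set.Icc (0:ℝ) 1 := fun x i =>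
    ⟨mul_nonneg hμ0.le (hftil _).1, by
      have h2 := (hftil (x i)).2
      calc μ * ftil (x i) ≤ μ * (1/μ) := mul_le_mul_of_nonneg_left h2 hμ0.le
        _ = 1 := by field_simp⟩
  have hprod : ∀ x : Fin m → X, (∏ i, ftil (x i) / N)
      = μ ^ (-(m:ℤ)) * ((1 / N ^ m) * ∏ i, μ * ftil (x i)) := by
    intro x
    rw [Finset.prod_div_distrib, Finset.prod_const, Finset.prod_mul_distrib,
      Finset.prod_const, Finset.card_univ, Fintype.card_fin, zpow_neg, zpow_natCast]
    field_simp
  have main : ∑ x : Fin m → X, (∏ i, ftil (x i) / N) * (Tbar x - Ttil x)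
      = μ ^ (-(m:ℤ)) * ∫ t : Fin m → II,
          ∑ x : Fin m → X, ((1:ℝ) / N ^ m) *
            ((if ∀ i, (t i : ℝ) ≤ μ * ftil (x i) then (1:ℝ) else 0) * (Tbar x - Ttil x)) := by
    rw [MeasureTheory.integral_finset_sum _
      (fun x _ => ((integ (fun i => μ * ftil (x i)) (Tbar x - Ttil x)).const_mul _)),
      Finset.mul_sum]
    refine Finset.sum_congr rfl fun x _ => ?_
    rw [hprod x, ← prod_int m _ (hc x), MeasureTheory.integral_const_mul,
      MeasureTheory.integral_mul_const]
    ring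
  rw [key, main, abs_mul, abs_of_pos (zpow_pos hμ0 _)]
  refine mul_le_mul_of_nonneg_left ?_ (zpow_pos hμ0 _).le
  have hb := MeasureTheory.norm_integral_le_of_norm_le_const (μ := (volume : Measure (Fin m → II)))
    (C := γ) (f := fun t : Fin m → II =>
      ∑ x : Fin m → X, ((1:ℝ) / N ^ m) *
        ((if ∀ i, (t i : ℝ) ≤ μ * ftil (x i) then (1:ℝ) else 0) * (Tbar x - Ttil x)))
    (Filter.Eventually.of_forall fun t => by
      rw [Real.norm_eq_abs]
      exact hreg (fun i => (t i : ℝ)) (fun i => (t i).2))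
  rw [Real.norm_eq_abs] at hb
  simpa [measure_univ] using hb
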